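/- Let A(λ) = I_n·λ^r + A_1·λ^{r−1} + ... + A_r and B(λ) = I_n·λ^r + B_1·λ^{r−1} + ... + B_r be monic n×n matrix polynomials of degree r over ℂ. Then the families {A_1, ..., A_r} and {B_1, ..., B_r} are similar over ℂ (i.e. there exists T ∈ GL(n, ℂ) with A_i = T·B_i·T^{−1} for all i = 1, ..., r) if and only if the matrix polynomials A(λ) and B(λ) are semi-scalar equivalent. -/

import Mathlib

open Polynomial

private lemma matPolyEquiv_repr {n r : ℕ} (Mc : Fin r → Matrix (Fin n) (Fin n) ℂ)
    (M : Matrix (Fin n) (Fin n) ℂ[X])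
    (h : M = (X ^ r : ℂ[X]) • (1 : Matrix (Fin n) (Fin n) ℂ[X]) +
      ∑ i : Fin r, (X ^ (r - 1 - (i : ℕ)) : ℂ[X]) • (Mc i).map Polynomial.C) :
    matPolyEquiv M = X ^ r + ∑ i : Fin r, monomial (r - 1 - (i : ℕ)) (Mc i) := by
  subst h
  rw [map_add, map_sum]
  congr 1
  · rw [matPolyEquiv_smul_one, Polynomial.map_pow, map_X]
  · refine Finset.sum_congr rfl fun i _ => ?_
    rw [matPolyEquiv_map_smul, matPolyEquiv_map_C, Polynomial.map_pow, map_X,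
      X_pow_mul, C_mul_X_pow_eq_monomial]

private lemma coeff_repr_top {n r : ℕ} (Mc : Fin r → Matrix (Fin n) (Fin n) ℂ) :
    ((X ^ r + ∑ i : Fin r, monomial (r - 1 - (i : ℕ)) (Mc i) :
      (Matrix (Fin n) (Fin n) ℂ)[X])).coeff r = 1 := by
  rw [coeff_add, coeff_X_pow, if_pos rfl, finset_sum_coeff]
  have : ∀ i : Fin r, (monomial (r - 1 - (i : ℕ)) (Mc i)).coeff r = 0 := by
    intro i
    rw [coeff_monomial, if_neg]
    have h1 : (i : ℕ) < r := i.isLt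
    omega
  simp [this]

private lemma coeff_repr_mid {n r : ℕ} (Mc : Fin r → Matrix (Fin n) (Fin n) ℂ) (m : Fin r) :
    ((X ^ r + ∑ i : Fin r, monomial (r - 1 - (i : ℕ)) (Mc i) :
      (Matrix (Fin n) (Fin n) ℂ)[X])).coeff (r - 1 - (m : ℕ)) = Mc m := by
  rw [coeff_add, coeff_X_pow, if_neg (by have := m.isLt; omega), finset_sum_coeff]
  rw [Finset.sum_eq_single m]
  · rw [coeff_monomial, if_pos rfl, zero_add]
  · intro i _ hne
    rw [coeff_monomial, if_neg]
    have h1 : (i : ℕ) < r := i.isLt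
    have h2 : (m : ℕ) < r := m.isLt
    intro h
    exact hne (Fin.ext (by omega))
  · intro h; exact absurd (Finset.mem_univ m) h

private lemma natDegree_repr_le {n r : ℕ} (Mc : Fin r → Matrix (Fin n) (Fin n) ℂ) :
    ((X ^ r + ∑ i : Fin r, monomial (r - 1 - (i : ℕ)) (Mc i) :
      (Matrix (Fin n) (Fin n) ℂ)[X])).natDegree ≤ r := by
  refine natDegree_add_le_of_degree_le (by simpa using natDegree_X_pow_le r) ?_
  refine natDegree_sum_le_of_forall_le _ _ fun i _ => ?_
  exact le_trans (natDegree_monomial_le _) (by omega)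

/-- The families of coefficients `{A₁, …, A_r}` and `{B₁, …, B_r}` of two monic `n × n`
matrix polynomials `A(λ) = Iₙλ^r + Σ Aᵢλ^{r-i}` and `B(λ) = Iₙλ^r + Σ Bᵢλ^{r-i}` over `ℂ`
are simultaneously similar over `ℂ` if and only if `A(λ)` and `B(λ)` are semi-scalar
equivalent. -/
theorem families_similar_iff_semi_scalar_equivalent
    {n r : ℕ}
    (Acoef Bcoef : Fin r → Matrix (Fin n) (Fin n) ℂ)
    (A B : Matrix (Fin n) (Fin n) ℂ[X])
    (hAdef : A = (X ^ r : ℂ[X]) • (1 : Matrix (Fin n) (Fin n) ℂ[X]) +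
      ∑ i : Fin r, (X ^ (r - 1 - (i : ℕ)) : ℂ[X]) • (Acoef i).map Polynomial.C)
    (hBdef : B = (X ^ r : ℂ[X]) • (1 : Matrix (Fin n) (Fin n) ℂ[X]) +
      ∑ i : Fin r, (X ^ (r - 1 - (i : ℕ)) : ℂ[X]) • (Bcoef i).map Polynomial.C) :
    (∃ T : Matrix (Fin n) (Fin n) ℂ, IsUnit T.det ∧
        ∀ i : Fin r, Acoef i = T * Bcoef i * T⁻¹) ↔
    (∃ P : Matrix (Fin n) (Fin n) ℂ, IsUnit P.det ∧
      ∃ Q : Matrix (Fin n) (Fin n) ℂ[X], IsUnit Q.det ∧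
        A = P.map Polynomial.C * B * Q) := by
  constructor
  · rintro ⟨T, hT, hsim⟩
    refine ⟨T, hT, (T⁻¹).map Polynomial.C, ?_, ?_⟩
    · have hd : ((T⁻¹).map (C : ℂ →+* ℂ[X])).det = C (T⁻¹.det) :=
        (RingHom.map_det (C : ℂ →+* ℂ[X]) T⁻¹).symm
      rw [hd]
      exact (Matrix.isUnit_nonsing_inv_det T hT).map (C : ℂ →+* ℂ[X])
    · have hTT : T * T⁻¹ = 1 := Matrix.mul_nonsing_inv T hT
      rw [hAdef, hBdef, mul_add, add_mul]
      congr 1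
      · rw [mul_smul_comm, smul_mul_assoc, mul_one, ← Matrix.map_mul, hTT, Matrix.map_one _ (map_zero _) (map_one _)]
      · rw [Finset.mul_sum, Finset.sum_mul]
        refine Finset.sum_congr rfl fun i _ => ?_
        rw [mul_smul_comm, smul_mul_assoc, ← Matrix.map_mul, ← Matrix.map_mul, ← hsim i]
  · rintro ⟨P, hP, Q, hQ, heq⟩
    rcases Nat.eq_zero_or_pos n with hn | hn
    · refine ⟨1, by simp, fun i => ?_⟩
      have : Subsingleton (Matrix (Fin n) (Fin n) ℂ) := by
        subst hn; infer_instance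
      exact Subsingleton.elim _ _
    have : Nonempty (Fin n) := ⟨⟨0, hn⟩⟩
    set A' := matPolyEquiv A with hA'
    set B' := matPolyEquiv B with hB'
    set Q' := matPolyEquiv Q with hQ'
    have hAr : A' = X ^ r + ∑ i : Fin r, monomial (r - 1 - (i : ℕ)) (Acoef i) :=
      matPolyEquiv_repr Acoef A hAdef
    have hBr : B' = X ^ r + ∑ i : Fin r, monomial (r - 1 - (i : ℕ)) (Bcoef i) :=
      matPolyEquiv_repr Bcoef B hBdef
    have hmul : A' = C P * B' * Q' := by
      rw [hA', heq, map_mul, map_mul, matPolyEquiv_map_C]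
    have hAtop : A'.coeff r = 1 := by rw [hAr]; exact coeff_repr_top Acoef
    have hBtop : B'.coeff r = 1 := by rw [hBr]; exact coeff_repr_top Bcoef
    have hAdeg : A'.natDegree = r := by
      refine le_antisymm (hAr ▸ natDegree_repr_le Acoef) ?_
      exact le_natDegree_of_ne_zero (by rw [hAtop]; exact one_ne_zero)
    have hBdeg : B'.natDegree = r := by
      refine le_antisymm (hBr ▸ natDegree_repr_le Bcoef) ?_
      exact le_natDegree_of_ne_zero (by rw [hBtop]; exact one_ne_zero)
    have hQ'ne : Q' ≠ 0 := by
      intro h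
      have : Q = 0 := by
        have := congrArg matPolyEquiv.symm h
        simpa [hQ'] using this
      rw [this, Matrix.det_zero] at hQ
      exact hQ.ne_zero rfl
    have hPinv : P⁻¹ * P = 1 := Matrix.nonsing_inv_mul P hP
    -- Q' has degree 0
    have hQdeg : Q'.natDegree = 0 := by
      by_contra hd
      have hd' : 0 < Q'.natDegree := Nat.pos_of_ne_zero hd
      have h1 : A'.coeff (r + Q'.natDegree) = 0 :=
        coeff_eq_zero_of_natDegree_lt (by omega)
      have h2 : (B' * Q').coeff (B'.natDegree + Q'.natDegree) =
          B'.leadingCoeff * Q'.leadingCoeff := coeff_mul_degree_add_degree B' Q'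
      have hBl : B'.leadingCoeff = 1 := by
        rw [leadingCoeff, hBdeg, hBtop]
      rw [hBdeg, hBl, one_mul] at h2
      have h3 : A'.coeff (r + Q'.natDegree) = P * Q'.leadingCoeff := by
        rw [hmul, mul_assoc, coeff_C_mul, h2]
      have : Q'.leadingCoeff = 0 := by
        have := h3.symm.trans h1
        calc Q'.leadingCoeff = P⁻¹ * (P * Q'.leadingCoeff) := by
              rw [← mul_assoc, hPinv, one_mul]
          _ = 0 := by rw [this, mul_zero]
      exact hQ'ne (leadingCoeff_eq_zero.mp this)
    have hQC : Q' = C (Q'.coeff 0) := eq_C_of_natDegree_eq_zero hQdeg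
    set Q0 := Q'.coeff 0 with hQ0
    have key : ∀ k : ℕ, A'.coeff k = P * B'.coeff k * Q0 := by
      intro k
      rw [hmul, hQC, coeff_mul_C, coeff_C_mul]
    have hPQ0 : P * Q0 = 1 := by
      have := key r
      rw [hAtop, hBtop, mul_one] at this
      exact this.symm
    have hQ0 : P⁻¹ = Q0 := Matrix.inv_eq_right_inv hPQ0
    refine ⟨P, hP, fun i => ?_⟩
    have := key (r - 1 - (i : ℕ))
    rw [hAr, hBr, coeff_repr_mid, coeff_repr_mid] at this
    rw [this, hQ0]
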